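/- arXiv:1311.4432 — 3 statements merged into one kernel-verified Lean document; each statement's English description precedes it below -/
import Mathlib

section
/- Let n ∈ ℕ and let A be a symmetric real n×n matrix with A i j ≤ 0 whenever i ≠ j and with zero row sums, i.e. Σ_j A i j = 0 for every i. Let L ≥ 0 and let G : ℝ → ℝ be monotone nondecreasing and Lipschitz with constant L (|G(s) − G(t)| ≤ L|s − t| for all s, t). Then for every vector x : Fin n → ℝ, writing g := (fun i => G (x i)), one has g ⬝ᵥ (A *ᵥ g) ≤ L * (x ⬝ᵥ (A *ᵥ g)). -/
open Matrix

lemma stiffness_quadratic_identity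
    (n : ℕ) (A : Matrix (Fin n) (Fin n) ℝ) (hsymm : A.IsSymm)
    (hrow : ∀ i, ∑ j, A i j = 0) (v g : Fin n → ℝ) :
    v ⬝ᵥ (A *ᵥ g) = -(1/2) * ∑ i, ∑ j, A i j * (v i - v j) * (g i - g j) := by
  have hsym : ∀ i j, A j i = A i j := by
    intro i j
    have := congrFun (congrFun hsymm j) i
    simpa [Matrix.transpose_apply] using this.symm
  have h1 : ∑ i, ∑ j, A i j * (v i * g i) = 0 := by
    simp only [← Finset.sum_mul]
    simp [hrow]
  have h2 : ∑ i, ∑ j, A i j * (v j * g j) = 0 := by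
    rw [Finset.sum_comm]
    refine Finset.sum_eq_zero fun j _ => ?_
    have : ∑ i, A i j * (v j * g j) = (∑ i, A i j) * (v j * g j) := by
      rw [Finset.sum_mul]
    rw [this]
    have : ∑ i, A i j = 0 := by
      simp only [hsym]
      exact hrow j
    simp [this]
  have h3 : ∑ i, ∑ j, A i j * (v j * g i) = ∑ i, ∑ j, A i j * (v i * g j) := by
    rw [Finset.sum_comm]
    refine Finset.sum_congr rfl fun i _ => Finset.sum_congr rfl fun j _ => ?_
    rw [hsym j i]
  have expand : ∑ i, ∑ j, A i j * (v i - v j) * (g i - g j)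
      = ∑ i, ∑ j, (A i j * (v i * g i) - A i j * (v i * g j)
        - A i j * (v j * g i) + A i j * (v j * g j)) := by
    refine Finset.sum_congr rfl fun i _ => Finset.sum_congr rfl fun j _ => ?_
    ring
  have dot : v ⬝ᵥ (A *ᵥ g) = ∑ i, ∑ j, A i j * (v i * g j) := by
    simp only [dotProduct, Matrix.mulVec, Finset.mul_sum]
    exact Finset.sum_congr rfl fun i _ => Finset.sum_congr rfl fun j _ => by ring
  rw [dot, expand]
  simp only [Finset.sum_add_distrib, Finset.sum_sub_distrib, h1, h2, h3]
  ring

/-- Matrix form of the stiffness inequality (3.23): if `A` is a symmetric stiffness-type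
matrix (nonpositive off-diagonal entries, zero row sums) and `G` is monotone nondecreasing
and Lipschitz with constant `L ≥ 0`, then for every nodal vector `x`, with `g i = G (x i)`,
one has `g ⬝ᵥ (A *ᵥ g) ≤ L * (x ⬝ᵥ (A *ᵥ g))`. -/
theorem stiffness_monotone_lipschitz_inequality
    (n : ℕ) (A : Matrix (Fin n) (Fin n) ℝ) (hsymm : A.IsSymm)
    (hoff : ∀ i j, i ≠ j → A i j ≤ 0)
    (hrow : ∀ i, ∑ j, A i j = 0)
    (L : ℝ) (hL : 0 ≤ L) (G : ℝ → ℝ) (hmono : Monotone G)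
    (hlip : ∀ s t : ℝ, |G s - G t| ≤ L * |s - t|)
    (x : Fin n → ℝ) :
    (fun i => G (x i)) ⬝ᵥ (A *ᵥ fun i => G (x i)) ≤
      L * (x ⬝ᵥ (A *ᵥ fun i => G (x i))) := by
  set g : Fin n → ℝ := fun i => G (x i) with hg
  rw [stiffness_quadratic_identity n A hsymm hrow g g,
    stiffness_quadratic_identity n A hsymm hrow x g]
  have hLS : L * ∑ i, ∑ j, A i j * (x i - x j) * (g i - g j)
      = ∑ i, ∑ j, L * (A i j * (x i - x j) * (g i - g j)) := by
    simp only [Finset.mul_sum]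
  have key : ∀ i j, L * (A i j * (x i - x j) * (g i - g j))
      ≤ A i j * (g i - g j) * (g i - g j) := by
    intro i j
    rcases eq_or_ne i j with rfl | hne
    · simp
    · have hA : A i j ≤ 0 := hoff i j hne
      -- (g i - g j)^2 ≤ L * (x i - x j) * (g i - g j)
      have hkey : (g i - g j) * (g i - g j) ≤ L * ((x i - x j) * (g i - g j)) := by
        have hlip' : |g i - g j| ≤ L * |x i - x j| := hlip (x i) (x j)
        have hsign : 0 ≤ (x i - x j) * (g i - g j) := by
          rcases le_total (x i) (x j) with h | h
          · have : g i ≤ g j := hmono h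
            nlinarith
          · have : g j ≤ g i := hmono h
            nlinarith
        have h1 : (g i - g j) * (g i - g j) = |g i - g j| * |g i - g j| := by
          rw [← abs_mul, abs_mul_self]
        have h2 : L * ((x i - x j) * (g i - g j)) = (L * |x i - x j|) * |g i - g j| := by
          rw [← abs_of_nonneg hsign, abs_mul]
          ring
        rw [h1, h2]
        exact mul_le_mul_of_nonneg_right hlip' (abs_nonneg _)
      nlinarith [hkey, mul_nonneg hL (abs_nonneg (x i - x j))]
  have hsum : ∑ i, ∑ j, L * (A i j * (x i - x j) * (g i - g j))
      ≤ ∑ i, ∑ j, A i j * (g i - g j) * (g i - g j) :=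
    Finset.sum_le_sum fun i _ => Finset.sum_le_sum fun j _ => key i j
  nlinarith [hsum, hLS]
end

section
/- Let n ∈ ℕ, let m : Fin n → ℝ satisfy m i > 0 for every i, let A be a symmetric real n×n matrix with A i j ≤ 0 for i ≠ j and zero row sums (Σ_j A i j = 0 for every i), and let c ≥ 0. Then for every b : Fin n → ℝ there exists a unique ψ : Fin n → ℝ such that m i * ψ i + c * (A *ᵥ ψ) i = b i for every i. Moreover, if b i ≥ 0 for every i, then ψ i ≥ 0 for every i. -/
open Matrix

/-- Discrete maximum principle: a solution of the system with nonnegative right-hand side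
is nonnegative. -/
lemma surfactant_dmp (n : ℕ) (m : Fin n → ℝ) (hm : ∀ i, 0 < m i)
    (A : Matrix (Fin n) (Fin n) ℝ)
    (hoff : ∀ i j, i ≠ j → A i j ≤ 0)
    (hrow : ∀ i, ∑ j, A i j = 0)
    (c : ℝ) (hc : 0 ≤ c) (b : Fin n → ℝ) (hb : ∀ i, 0 ≤ b i)
    (ψ : Fin n → ℝ) (heq : ∀ i, m i * ψ i + c * (A *ᵥ ψ) i = b i) :
    ∀ i, 0 ≤ ψ i := by
  rcases isEmpty_or_nonempty (Fin n) with h | h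
  · intro i; exact (h.false i).elim
  obtain ⟨i0, -, hi0⟩ := Finset.exists_min_image Finset.univ ψ ⟨Classical.arbitrary _, Finset.mem_univ _⟩
  have hmin : ∀ j, ψ i0 ≤ ψ j := fun j => hi0 j (Finset.mem_univ j)
  have hAψ : (A *ᵥ ψ) i0 ≤ 0 := by
    have h1 : (A *ᵥ ψ) i0 ≤ ∑ j, A i0 j * ψ i0 := by
      rw [Matrix.mulVec, dotProduct]
      apply Finset.sum_le_sum
      intro j _
      rcases eq_or_ne i0 j with rfl | hne
      · exact le_rfl
      · exact mul_le_mul_of_nonpos_left (hmin j) (hoff i0 j hne)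
    calc (A *ᵥ ψ) i0 ≤ ∑ j, A i0 j * ψ i0 := h1
      _ = (∑ j, A i0 j) * ψ i0 := by rw [Finset.sum_mul]
      _ = 0 := by rw [hrow i0, zero_mul]
  have h2 : 0 ≤ m i0 * ψ i0 := by
    have := heq i0
    nlinarith [hb i0, mul_nonpos_of_nonneg_of_nonpos hc hAψ]
  have hψ0 : 0 ≤ ψ i0 := by nlinarith [hm i0]
  exact fun i => le_trans hψ0 (hmin i)

/-- Matrix form of the surfactant step of the fully discrete scheme: with positive lumped
masses `m`, a symmetric stiffness-type matrix `A` (nonpositive off-diagonal entries, zero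
row sums) and `c ≥ 0`, the linear system `m i * ψ i + c * (A *ᵥ ψ) i = b i` has a unique
solution `ψ`, and if `b ≥ 0` then `ψ ≥ 0` (discrete maximum principle). -/
theorem surfactant_step_existence_uniqueness_nonneg
    (n : ℕ) (m : Fin n → ℝ) (hm : ∀ i, 0 < m i)
    (A : Matrix (Fin n) (Fin n) ℝ) (hsymm : A.IsSymm)
    (hoff : ∀ i j, i ≠ j → A i j ≤ 0)
    (hrow : ∀ i, ∑ j, A i j = 0)
    (c : ℝ) (hc : 0 ≤ c) (b : Fin n → ℝ) :
    (∃! ψ : Fin n → ℝ, ∀ i, m i * ψ i + c * (A *ᵥ ψ) i = b i) ∧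
    ((∀ i, 0 ≤ b i) → ∀ ψ : Fin n → ℝ,
      (∀ i, m i * ψ i + c * (A *ᵥ ψ) i = b i) → ∀ i, 0 ≤ ψ i) := by
  set M : Matrix (Fin n) (Fin n) ℝ := Matrix.diagonal m + c • A with hM
  have hMv : ∀ (ψ : Fin n → ℝ) (i : Fin n),
      (M *ᵥ ψ) i = m i * ψ i + c * (A *ᵥ ψ) i := by
    intro ψ i
    simp [hM, Matrix.add_mulVec, Matrix.mulVec_diagonal, Matrix.smul_mulVec,
      Pi.smul_apply, smul_eq_mul]
  have hker : ∀ ψ : Fin n → ℝ, M *ᵥ ψ = 0 → ψ = 0 := by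
    intro ψ hψ
    have h0 : ∀ i, m i * ψ i + c * (A *ᵥ ψ) i = (0 : Fin n → ℝ) i := by
      intro i; rw [← hMv ψ i, hψ]
    have hpos : ∀ i, 0 ≤ ψ i :=
      surfactant_dmp n m hm A hoff hrow c hc 0 (fun _ => le_rfl) ψ (by simpa using h0)
    have hneg : ∀ i, 0 ≤ (-ψ) i := by
      refine surfactant_dmp n m hm A hoff hrow c hc 0 (fun _ => le_rfl) (-ψ) ?_
      intro i
      have h0i := h0 i
      simp only [Matrix.mulVec_neg, Pi.neg_apply, Pi.zero_apply] at *
      linarith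
    funext i
    have h1 := hpos i
    have h2 := hneg i
    simp only [Pi.neg_apply] at h2
    simp only [Pi.zero_apply]
    linarith
  have hinj : Function.Injective M.mulVecLin := by
    rw [injective_iff_map_eq_zero']
    intro ψ
    constructor
    · intro h; exact hker ψ (by simpa using h)
    · rintro rfl; simp
  have hsurj : Function.Surjective M.mulVecLin :=
    (LinearMap.injective_iff_surjective (f := M.mulVecLin)).mp hinj
  obtain ⟨ψ, hψ⟩ := hsurj b
  constructor
  · refine ⟨ψ, fun i => by rw [← hMv ψ i]; exact congrFun hψ i, ?_⟩
    intro φ hφ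
    have h1 : M *ᵥ (φ - ψ) = 0 := by
      rw [Matrix.mulVec_sub]
      funext i
      simp only [Pi.sub_apply, Pi.zero_apply]
      have hψi : (M *ᵥ ψ) i = b i := congrFun hψ i
      have hφi : (M *ᵥ φ) i = b i := by rw [hMv φ i]; exact hφ i
      rw [hψi, hφi, sub_self]
    have := hker _ h1
    funext i
    have := congrFun this i
    simp only [Pi.sub_apply, Pi.zero_apply] at this
    linarith
  · intro hb φ hφ
    exact surfactant_dmp n m hm A hoff hrow c hc b hb φ hφ
end

section
/- Let γ₀ > 0, β > 0 and let ε satisfy 0 < ε ≤ 1 and β·ε ≤ 1. Let F(r) := γ₀(1 + βr(log r − 1)) be the surface energy of the linear equation of state, so that F′(ε) = γ₀ β log ε and F″(ε) = γ₀ β/ε, and let F_ε(r) := F(ε) + F′(ε)(r − ε) + ½ F″(ε)(r − ε)² for r ≤ ε (the quadratic regularization). Then for every r ≤ 0 one has F_ε(r) ≥ (γ₀ β/(2ε)) · r². -/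
/-- Quadratic lower bound on the regularized surface energy of the linear equation of state
on the negative half-line: with `F(r) = γ₀(1 + βr(log r - 1))`, `0 < ε ≤ 1`, `βε ≤ 1`, and
`F_ε(r) = F(ε) + F′(ε)(r - ε) + ½F″(ε)(r - ε)²` for `r ≤ ε`, one has
`F_ε(r) ≥ (γ₀β/(2ε)) r²` for every `r ≤ 0`. -/
theorem regularized_linear_energy_lower_bound
    (γ₀ β ε : ℝ) (hγ₀ : 0 < γ₀) (hβ : 0 < β)
    (hε0 : 0 < ε) (hε1 : ε ≤ 1) (hβε : β * ε ≤ 1)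
    (F Fε : ℝ → ℝ)
    (hF : ∀ r, F r = γ₀ * (1 + β * r * (Real.log r - 1)))
    (hFε : ∀ r : ℝ, r ≤ ε → Fε r =
      F ε + deriv F ε * (r - ε) + (1 / 2) * deriv (deriv F) ε * (r - ε) ^ 2) :
    ∀ r : ℝ, r ≤ 0 → γ₀ * β / (2 * ε) * r ^ 2 ≤ Fε r := by
  -- F as a lambda
  have hFfun : F = fun r => γ₀ * (1 + β * (r * (Real.log r - 1))) := by
    funext r; rw [hF]; ring
  -- first derivative on (0,∞)
  have hF' : ∀ x : ℝ, 0 < x → HasDerivAt F (γ₀ * β * Real.log x) x := by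
    intro x hx
    have h1 : HasDerivAt (fun r : ℝ => r * (Real.log r - 1)) (Real.log x) x := by
      have := (hasDerivAt_id x).mul ((Real.hasDerivAt_log hx.ne').sub_const 1)
      refine this.congr_deriv ?_
      simp only [id, one_mul]; rw [mul_inv_cancel₀ hx.ne']; ring
    have h2 := ((h1.const_mul β).const_add 1).const_mul γ₀
    rw [hFfun]
    refine h2.congr_deriv ?_
    ring
  have hderivF : ∀ x : ℝ, 0 < x → deriv F x = γ₀ * β * Real.log x := fun x hx =>
    (hF' x hx).deriv
  -- second derivative at ε
  have heq : deriv F =ᶠ[nhds ε] fun x => γ₀ * β * Real.log x := by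
    filter_upwards [eventually_gt_nhds hε0] with x hx using hderivF x hx
  have hderiv2 : deriv (deriv F) ε = γ₀ * β * (1 / ε) := by
    rw [heq.deriv_eq]
    simp only [one_div]; exact ((Real.hasDerivAt_log hε0.ne').const_mul (γ₀ * β)).deriv
  intro r hr
  rw [hFε r (le_trans hr hε0.le), hderivF ε hε0, hderiv2]
  set L := Real.log ε with hLdef
  have hL : L ≤ 0 := Real.log_nonpos hε0.le hε1
  have key : F ε + γ₀ * β * L * (r - ε) + (1 / 2) * (γ₀ * β * (1 / ε)) * (r - ε) ^ 2
      - γ₀ * β / (2 * ε) * r ^ 2 = γ₀ - γ₀ * β * ε / 2 + γ₀ * β * r * (L - 1) := by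
    rw [hF]
    field_simp
    ring
  have h3 : 0 ≤ γ₀ * β * ((-r) * (1 - L)) := by
    apply mul_nonneg (mul_nonneg hγ₀.le hβ.le)
    apply mul_nonneg (by linarith) (by linarith)
  have h4 : γ₀ * β * r * (L - 1) = γ₀ * β * ((-r) * (1 - L)) := by ring
  have h5 : γ₀ * (β * ε) ≤ γ₀ * 1 := mul_le_mul_of_nonneg_left hβε hγ₀.le
  linarith [key, h3, h4.ge, h4.le]
end
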